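/- In the game constructed from an EXACT COVER instance (with s column players, 3s+2 row strategies and w+2 column strategies), there exists a transformation path of total cost 0 from the profile (r^1, c^1, …, c^1) (all players play their first strategy) to the profile (r^{3s+2}, c^{w+2}, …, c^{w+2}) (all players play their last strategy) if and only if there exist s indices i₁, …, i_s ∈ {1,…,w} such that X_{i₁} ∪ X_{i₂} ∪ ⋯ ∪ X_{i_s} = {1,…,3s}. -/

import Mathlib

open Finset

/-- Reward needed to incentivize the row player to play `i'` when the columns play `𝒞`. -/
noncomputable def Trow {m n k : ℕ} [NeZero m] (R : Fin m → Fin n → ℝ)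
    (𝒞 : Fin k → Fin n) (i' : Fin m) : ℝ :=
  (univ.sup' univ_nonempty fun i => ∑ j, R i (𝒞 j)) - ∑ j, R i' (𝒞 j)

/-- Reward needed to incentivize the column players to play `𝒞'` when the row plays `i`. -/
noncomputable def Tcol {m n k : ℕ} [NeZero n] (C : Fin m → Fin n → ℝ)
    (i : Fin m) (𝒞' : Fin k → Fin n) : ℝ :=
  k * (univ.sup' univ_nonempty fun q => C i q) - ∑ j, C i (𝒞' j)

/-- Total cost of the transformation path `P 0, P 1, …, P L`. -/
noncomputable def pathCost {m n k : ℕ} [NeZero m] [NeZero n] (R C : Fin m → Fin n → ℝ)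
    (P : ℕ → Fin m × (Fin k → Fin n)) (L : ℕ) : ℝ :=
  ∑ t ∈ Finset.range L, (Tcol C (P t).1 (P (t+1)).2 + Trow R (P t).2 (P (t+1)).1)

/-- The column players' payoff matrix of the game constructed from an EXACT COVER instance
(indices are 0-based: 0-based entry `(i,j)` is 1-based entry `(i+1,j+1)`). -/
noncomputable def ECcol (s w : ℕ) : Fin (3*s+2) → Fin (w+2) → ℝ :=
  fun i j => if (i.val ≤ 3*s ∧ j.val ≤ w) ∨ (i.val = 3*s+1 ∧ j.val = w+1) then 1 else 0

/-- The row player's payoff matrix of the game constructed from an EXACT COVER instance with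
subsets `X 1, …, X w ⊆ {1,…,3s}`; column `j` (for `1 ≤ j ≤ w`, 0-based) carries the
characteristic vector of `X j` (indices are 0-based). -/
noncomputable def ECrow (s w : ℕ) (X : ℕ → Finset ℕ) : Fin (3*s+2) → Fin (w+2) → ℝ :=
  fun i j =>
    if i.val = 0 then (if j.val = w+1 then -1 else 0)
    else if i.val = 3*s+1 then
      (if j.val = 0 then -(s : ℝ) else if j.val = w+1 then 1 else 1/(s : ℝ))
    else
      if j.val = 0 ∨ j.val = w+1 then 0
      else if i.val ∈ X j.val then 1 else 0

section Aux

variable {s w k : ℕ} (X : ℕ → Finset ℕ)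

lemma Trow_nonneg {m n : ℕ} [NeZero m] (R : Fin m → Fin n → ℝ)
    (𝒞 : Fin k → Fin n) (i' : Fin m) : 0 ≤ Trow R 𝒞 i' :=
  sub_nonneg.mpr (le_sup' (fun i => ∑ j, R i (𝒞 j)) (mem_univ i'))

lemma Tcol_nonneg {m n : ℕ} [NeZero n] (C : Fin m → Fin n → ℝ)
    (i : Fin m) (𝒞' : Fin k → Fin n) : 0 ≤ Tcol C i 𝒞' := by
  have h : ∑ j : Fin k, C i (𝒞' j) ≤ ∑ _j : Fin k, (univ.sup' univ_nonempty fun q => C i q) :=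
    Finset.sum_le_sum fun j _ => le_sup' (fun q => C i q) (mem_univ (𝒞' j))
  simp only [Finset.sum_const, card_univ, Fintype.card_fin, nsmul_eq_mul] at h
  exact sub_nonneg.mpr h

lemma Trow_zero_iff {m n : ℕ} [NeZero m] (R : Fin m → Fin n → ℝ)
    (𝒞 : Fin k → Fin n) (i' : Fin m) :
    Trow R 𝒞 i' = 0 ↔ ∀ i, ∑ j, R i (𝒞 j) ≤ ∑ j, R i' (𝒞 j) := by
  unfold Trow
  rw [sub_eq_zero]
  constructor
  · intro h i
    exact le_trans (le_sup' (fun i => ∑ j, R i (𝒞 j)) (mem_univ i)) h.le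
  · intro h
    exact le_antisymm (Finset.sup'_le _ _ fun i _ => h i)
      (le_sup' (fun i => ∑ j, R i (𝒞 j)) (mem_univ i'))

lemma ECcol_le_one (i : Fin (3*s+2)) (j : Fin (w+2)) : ECcol s w i j ≤ 1 := by
  unfold ECcol; split_ifs <;> norm_num

lemma ECcol_sup (i : Fin (3*s+2)) :
    (univ.sup' univ_nonempty fun q => ECcol s w i q) = 1 := by
  apply le_antisymm
  · exact Finset.sup'_le _ _ fun q _ => ECcol_le_one i q
  · rcases Nat.lt_or_ge i.val (3*s+1) with h | h
    · have h1 : ECcol s w i ⟨0, by omega⟩ = 1 := by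
        unfold ECcol; rw [if_pos (Or.inl ⟨by omega, Nat.zero_le w⟩)]
      exact h1 ▸ le_sup' (fun q => ECcol s w i q) (mem_univ ⟨0, by omega⟩)
    · have hi : i.val = 3*s+1 := by have := i.isLt; omega
      have h1 : ECcol s w i ⟨w+1, by omega⟩ = 1 := by
        unfold ECcol; rw [if_pos (Or.inr ⟨hi, rfl⟩)]
      exact h1 ▸ le_sup' (fun q => ECcol s w i q) (mem_univ ⟨w+1, by omega⟩)

lemma Tcol_zero_iff (i : Fin (3*s+2)) (𝒞' : Fin k → Fin (w+2)) :
    Tcol (ECcol s w) i 𝒞' = 0 ↔ ∀ j, ECcol s w i (𝒞' j) = 1 := by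
  unfold Tcol
  rw [ECcol_sup, mul_one, sub_eq_zero]
  have hk : (k : ℝ) = ∑ _j : Fin k, (1 : ℝ) := by simp
  rw [hk, eq_comm]
  rw [Finset.sum_eq_sum_iff_of_le fun j _ => ECcol_le_one i (𝒞' j)]
  constructor
  · exact fun h j => h j (mem_univ j)
  · exact fun h j _ => h j

lemma ECcol_one_of (i : Fin (3*s+2)) (j : Fin (w+2)) (hi : i.val ≤ 3*s) (hj : j.val ≤ w) :
    ECcol s w i j = 1 := by
  unfold ECcol; rw [if_pos (Or.inl ⟨hi, hj⟩)]

lemma ECcol_char (i : Fin (3*s+2)) (j : Fin (w+2)) (hi : i.val ≤ 3*s)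
    (h : ECcol s w i j = 1) : j.val ≤ w := by
  by_contra hj
  unfold ECcol at h
  rw [if_neg (by omega)] at h
  norm_num at h

lemma ECcol_char' (i : Fin (3*s+2)) (j : Fin (w+2)) (hi : i.val = 3*s+1)
    (h : ECcol s w i j = 1) : j.val = w+1 := by
  by_contra hj
  unfold ECcol at h
  rw [if_neg (by omega)] at h
  norm_num at h

/-- value of ECrow in row 0 at non-last column -/
lemma ECrow_zero (i : Fin (3*s+2)) (j : Fin (w+2)) (hi : i.val = 0) (hj : j.val ≤ w) :
    ECrow s w X i j = 0 := by
  unfold ECrow; rw [if_pos hi, if_neg (by omega)]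

lemma ECrow_last_mid (hs : 1 ≤ s) (i : Fin (3*s+2)) (j : Fin (w+2)) (hi : i.val = 3*s+1)
    (hj0 : 1 ≤ j.val) (hjw : j.val ≤ w) : ECrow s w X i j = 1/(s:ℝ) := by
  unfold ECrow
  rw [if_neg (by omega), if_pos hi, if_neg (by omega), if_neg (by omega)]

lemma ECrow_mid (i : Fin (3*s+2)) (j : Fin (w+2)) (hi0 : 1 ≤ i.val) (hi : i.val ≤ 3*s)
    (hj0 : 1 ≤ j.val) (hjw : j.val ≤ w) :
    ECrow s w X i j = if i.val ∈ X j.val then 1 else 0 := by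
  unfold ECrow
  rw [if_neg (by omega), if_neg (by omega), if_neg (by omega)]

lemma ECrow_col0_le (hs : 1 ≤ s) (hw : 1 ≤ w) (i : Fin (3*s+2)) (j : Fin (w+2))
    (hj : j.val = 0) : ECrow s w X i j ≤ 0 := by
  unfold ECrow
  by_cases h1 : i.val = 0
  · rw [if_pos h1, if_neg (by omega)]
  · rw [if_neg h1]
    by_cases h2 : i.val = 3*s+1
    · rw [if_pos h2, if_pos hj]
      exact neg_nonpos.mpr (Nat.cast_nonneg s)
    · rw [if_neg h2, if_pos (Or.inl hj)]

lemma cast_cov (P : Fin k → Prop) [DecidablePred P] :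
    ((∑ j : Fin k, if P j then 1 else 0 : ℕ) : ℝ) = ∑ j : Fin k, if P j then (1:ℝ) else 0 := by
  rw [Nat.cast_sum]
  exact Finset.sum_congr rfl fun j _ => by split_ifs <;> simp

/-- total coverage count -/
lemma cov_total (hs : 1 ≤ s)
    (hXsub : ∀ t, 1 ≤ t → t ≤ w → X t ⊆ Finset.Icc 1 (3*s))
    (hXcard : ∀ t, 1 ≤ t → t ≤ w → (X t).card = 3)
    (g : Fin k → ℕ) (hg : ∀ j, 1 ≤ g j ∧ g j ≤ w) :
    ∑ i ∈ Finset.Icc 1 (3*s), (∑ j : Fin k, if i ∈ X (g j) then 1 else 0 : ℕ) = 3 * k := by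
  rw [Finset.sum_comm]
  have h1 : ∀ j : Fin k, (∑ i ∈ Finset.Icc 1 (3*s), if i ∈ X (g j) then 1 else 0 : ℕ) = 3 := by
    intro j
    have hf : (Finset.Icc 1 (3*s)).filter (fun i => i ∈ X (g j)) = X (g j) := by
      ext a
      simp only [Finset.mem_filter]
      exact ⟨fun h => h.2, fun h => ⟨hXsub _ (hg j).1 (hg j).2 h, h⟩⟩
    rw [← Finset.sum_filter, hf, Finset.sum_const, smul_eq_mul, mul_one,
      hXcard _ (hg j).1 (hg j).2]
  rw [Finset.sum_congr rfl fun j _ => h1 j, Finset.sum_const, card_univ, Fintype.card_fin,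
    smul_eq_mul, mul_comm]

end Aux

section Main

variable {s w : ℕ} {X : ℕ → Finset ℕ}

lemma ECrow_last0 (hs : 1 ≤ s) (i : Fin (3*s+2)) (j : Fin (w+2)) (hi : i.val = 3*s+1)
    (hj : j.val = 0) : ECrow s w X i j = -(s:ℝ) := by
  unfold ECrow
  rw [if_neg (by omega), if_pos hi, if_pos hj]

lemma rowsum_last (hs : 1 ≤ s) (𝒞 : Fin s → Fin (w+2))
    (h : ∀ j, 1 ≤ (𝒞 j).val ∧ (𝒞 j).val ≤ w) (i : Fin (3*s+2)) (hi : i.val = 3*s+1) :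
    ∑ j, ECrow s w X i (𝒞 j) = 1 := by
  have h1 : ∀ j : Fin s, ECrow s w X i (𝒞 j) = 1/(s:ℝ) := fun j =>
    ECrow_last_mid X hs i (𝒞 j) hi (h j).1 (h j).2
  rw [Finset.sum_congr rfl fun j _ => h1 j, Finset.sum_const, card_univ, Fintype.card_fin,
    nsmul_eq_mul]
  have : (s:ℝ) ≠ 0 := by positivity
  field_simp

lemma rowsum_zero (𝒞 : Fin s → Fin (w+2)) (h : ∀ j, (𝒞 j).val ≤ w)
    (i : Fin (3*s+2)) (hi : i.val = 0) :
    ∑ j, ECrow s w X i (𝒞 j) = 0 :=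
  Finset.sum_eq_zero fun j _ => ECrow_zero X i (𝒞 j) hi (h j)

lemma rowsum_mid (𝒞 : Fin s → Fin (w+2)) (h : ∀ j, 1 ≤ (𝒞 j).val ∧ (𝒞 j).val ≤ w)
    (i : Fin (3*s+2)) (hi0 : 1 ≤ i.val) (hi : i.val ≤ 3*s) :
    ∑ j, ECrow s w X i (𝒞 j)
      = ((∑ j : Fin s, if i.val ∈ X ((𝒞 j).val) then 1 else 0 : ℕ) : ℝ) := by
  rw [cast_cov]
  exact Finset.sum_congr rfl fun j _ => ECrow_mid X i (𝒞 j) hi0 hi (h j).1 (h j).2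

lemma card_Icc_3s : (Finset.Icc 1 (3*s)).card = 3*s := by
  rw [Nat.card_Icc]; omega

lemma cov_ge_one (hs : 1 ≤ s)
    (hXsub : ∀ t, 1 ≤ t → t ≤ w → X t ⊆ Finset.Icc 1 (3*s))
    (hXcard : ∀ t, 1 ≤ t → t ≤ w → (X t).card = 3)
    (g : Fin s → ℕ) (hg : ∀ j, 1 ≤ g j ∧ g j ≤ w)
    (hle : ∀ a ∈ Finset.Icc 1 (3*s), (∑ j : Fin s, if a ∈ X (g j) then 1 else 0 : ℕ) ≤ 1)
    (a : ℕ) (ha : a ∈ Finset.Icc 1 (3*s)) :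
    1 ≤ (∑ j : Fin s, if a ∈ X (g j) then 1 else 0 : ℕ) := by
  by_contra hc
  have htot := cov_total X hs hXsub hXcard g hg
  have hlt : ∑ i ∈ Finset.Icc 1 (3*s), (∑ j : Fin s, if i ∈ X (g j) then 1 else 0 : ℕ)
      < ∑ _i ∈ Finset.Icc 1 (3*s), 1 :=
    Finset.sum_lt_sum (fun i hi => hle i hi) ⟨a, ha, by omega⟩
  rw [htot, Finset.sum_const, smul_eq_mul, mul_one, card_Icc_3s] at hlt
  omega

lemma cov_le_one (hs : 1 ≤ s)
    (hXsub : ∀ t, 1 ≤ t → t ≤ w → X t ⊆ Finset.Icc 1 (3*s))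
    (hXcard : ∀ t, 1 ≤ t → t ≤ w → (X t).card = 3)
    (g : Fin s → ℕ) (hg : ∀ j, 1 ≤ g j ∧ g j ≤ w)
    (hge : ∀ a ∈ Finset.Icc 1 (3*s), 1 ≤ (∑ j : Fin s, if a ∈ X (g j) then 1 else 0 : ℕ))
    (a : ℕ) (ha : a ∈ Finset.Icc 1 (3*s)) :
    (∑ j : Fin s, if a ∈ X (g j) then 1 else 0 : ℕ) ≤ 1 := by
  by_contra hc
  have htot := cov_total X hs hXsub hXcard g hg
  have hlt : ∑ _i ∈ Finset.Icc 1 (3*s), 1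
      < ∑ i ∈ Finset.Icc 1 (3*s), (∑ j : Fin s, if i ∈ X (g j) then 1 else 0 : ℕ) :=
    Finset.sum_lt_sum (fun i hi => hge i hi) ⟨a, ha, by omega⟩
  rw [htot, Finset.sum_const, smul_eq_mul, mul_one, card_Icc_3s] at hlt
  omega

lemma best_last (hs : 1 ≤ s)
    (𝒞 : Fin s → Fin (w+2)) (h1 : ∀ j, 1 ≤ (𝒞 j).val ∧ (𝒞 j).val ≤ w)
    (hcov : ∀ a ∈ Finset.Icc 1 (3*s),
      (∑ j : Fin s, if a ∈ X ((𝒞 j).val) then 1 else 0 : ℕ) ≤ 1)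
    (i' : Fin (3*s+2)) (hi' : i'.val = 3*s+1) :
    ∀ i, ∑ j, ECrow s w X i (𝒞 j) ≤ ∑ j, ECrow s w X i' (𝒞 j) := by
  intro i
  rw [rowsum_last hs 𝒞 h1 i' hi']
  rcases Nat.eq_zero_or_pos i.val with hi0 | hi0
  · rw [rowsum_zero 𝒞 (fun j => (h1 j).2) i hi0]; norm_num
  · rcases Nat.lt_or_ge i.val (3*s+1) with hilt | hige
    · rw [rowsum_mid 𝒞 h1 i hi0 (by omega)]
      have := hcov i.val (Finset.mem_Icc.mpr ⟨hi0, by omega⟩)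
      exact_mod_cast this
    · have : i.val = 3*s+1 := by have := i.isLt; omega
      rw [rowsum_last hs 𝒞 h1 i this]

end Main

/-- In the game constructed from an EXACT COVER instance (`s` column players, `3s+2` row
strategies, `w+2` column strategies), there is a transformation path of total cost `0` from
`(r^1, c^1, …, c^1)` to `(r^{3s+2}, c^{w+2}, …, c^{w+2})` iff there are `s` indices
`i₁, …, i_s ∈ {1,…,w}` with `X_{i₁} ∪ ⋯ ∪ X_{i_s} = {1,…,3s}`. -/
theorem exact_cover_iff_zero_cost_transformation_path
    (s w : ℕ) (hs : 1 ≤ s) (hsw : s ≤ w)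
    (X : ℕ → Finset ℕ)
    (hXsub : ∀ t, 1 ≤ t → t ≤ w → X t ⊆ Finset.Icc 1 (3*s))
    (hXcard : ∀ t, 1 ≤ t → t ≤ w → (X t).card = 3) :
    (∃ (L : ℕ) (P : ℕ → Fin (3*s+2) × (Fin s → Fin (w+2))),
        P 0 = (⟨0, by omega⟩, fun _ => ⟨0, by omega⟩) ∧
        P L = (⟨3*s+1, by omega⟩, fun _ => ⟨w+1, by omega⟩) ∧
        pathCost (ECrow s w X) (ECcol s w) P L = 0) ↔
      (∃ f : Fin s → ℕ, (∀ t, f t ∈ Finset.Icc 1 w) ∧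
        Finset.univ.biUnion (fun t => X (f t)) = Finset.Icc 1 (3*s)) := by
  constructor
  · rintro ⟨L, P, hP0, hPL, hcost⟩
    -- every summand is zero
    have hterms : ∀ t ∈ Finset.range L,
        Tcol (ECcol s w) (P t).1 (P (t+1)).2 + Trow (ECrow s w X) (P t).2 (P (t+1)).1 = 0 := by
      rw [pathCost] at hcost
      exact (Finset.sum_eq_zero_iff_of_nonneg fun t _ =>
        add_nonneg (Tcol_nonneg _ _ _) (Trow_nonneg _ _ _)).mp hcost
    have hTcol : ∀ t, t < L → Tcol (ECcol s w) (P t).1 (P (t+1)).2 = 0 := by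
      intro t ht
      have h := hterms t (Finset.mem_range.mpr ht)
      have h1 := Tcol_nonneg (ECcol s w) (P t).1 (P (t+1)).2
      have h2 := Trow_nonneg (ECrow s w X) (P t).2 (P (t+1)).1
      linarith
    have hTrow : ∀ t, t < L → Trow (ECrow s w X) (P t).2 (P (t+1)).1 = 0 := by
      intro t ht
      have h := hterms t (Finset.mem_range.mpr ht)
      have h1 := Tcol_nonneg (ECcol s w) (P t).1 (P (t+1)).2
      have h2 := Trow_nonneg (ECrow s w X) (P t).2 (P (t+1)).1
      linarith
    -- first time the row player plays the last row
    have hex : ∃ t, ((P t).1 : ℕ) = 3*s+1 := ⟨L, by rw [hPL]⟩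
    set t₀ := Nat.find hex with ht₀def
    have hspec : ((P t₀).1 : ℕ) = 3*s+1 := Nat.find_spec hex
    have hmin : ∀ t, t < t₀ → ((P t).1 : ℕ) ≠ 3*s+1 := fun t ht => Nat.find_min hex ht
    have ht₀L : t₀ ≤ L := Nat.find_min' hex (by rw [hPL])
    have h00 : ((P 0).1 : ℕ) = 0 := by rw [hP0]
    have ht₀pos : 1 ≤ t₀ := by
      rcases Nat.eq_zero_or_pos t₀ with h | h
      · rw [h] at hspec; omega
      · exact h
    have hLpos : 0 < L := lt_of_lt_of_le (by omega) ht₀L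
    -- the column profile just before
    set 𝒞 := (P (t₀ - 1)).2 with h𝒞def
    have hsucc : t₀ - 1 + 1 = t₀ := by omega
    have hrow0 : Trow (ECrow s w X) 𝒞 (P t₀).1 = 0 := by
      have := hTrow (t₀ - 1) (by omega)
      rwa [hsucc] at this
    have hbr : ∀ i, ∑ j, ECrow s w X i (𝒞 j) ≤ ∑ j, ECrow s w X (P t₀).1 (𝒞 j) :=
      (Trow_zero_iff _ _ _).mp hrow0
    -- all columns in 𝒞 avoid the last column
    have h𝒞w : ∀ j, (𝒞 j).val ≤ w := by
      rcases Nat.lt_or_ge t₀ 2 with h2 | h2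
      · have ht1 : t₀ = 1 := by omega
        intro j
        have : 𝒞 = (P 0).2 := by rw [h𝒞def, ht1]
        rw [this, hP0]
        simp
      · have hcol := hTcol (t₀ - 2) (by omega)
        have hsucc2 : t₀ - 2 + 1 = t₀ - 1 := by omega
        rw [hsucc2] at hcol
        have hrowle : ((P (t₀ - 2)).1 : ℕ) ≤ 3*s := by
          have h1 := hmin (t₀ - 2) (by omega)
          have h2 := (P (t₀ - 2)).1.isLt
          omega
        intro j
        exact ECcol_char _ _ hrowle (((Tcol_zero_iff _ _).mp hcol) j)
    -- all columns in 𝒞 avoid the first column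
    have h𝒞1 : ∀ j, 1 ≤ (𝒞 j).val := by
      by_contra hcon
      push_neg at hcon
      obtain ⟨j₀, hj₀⟩ := hcon
      have hj₀0 : (𝒞 j₀).val = 0 := by omega
      have h0le : (0:ℝ) ≤ ∑ j, ECrow s w X (P t₀).1 (𝒞 j) := by
        have := hbr ⟨0, by omega⟩
        rwa [rowsum_zero 𝒞 h𝒞w ⟨0, by omega⟩ rfl] at this
      have hub : ∑ j, ECrow s w X (P t₀).1 (𝒞 j)
          ≤ ∑ j : Fin s, (if j = j₀ then -(s:ℝ) else 1/(s:ℝ)) := by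
        apply Finset.sum_le_sum
        intro j _
        by_cases hj : j = j₀
        · rw [if_pos hj, hj]
          exact (ECrow_last0 (X := X) hs _ _ hspec hj₀0).le
        · rw [if_neg hj]
          rcases Nat.eq_zero_or_pos (𝒞 j).val with h0 | h0
          · rw [ECrow_last0 (X := X) hs _ _ hspec h0]
            have h1 : (0:ℝ) < 1/(s:ℝ) := by positivity
            have h2 : (0:ℝ) ≤ (s:ℝ) := Nat.cast_nonneg s
            linarith
          · rw [ECrow_last_mid X hs _ _ hspec h0 (h𝒞w j)]
      have hsum : ∑ j : Fin s, (if j = j₀ then -(s:ℝ) else 1/(s:ℝ))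
          = 1 - (s:ℝ) - 1/(s:ℝ) := by
        have he : ∀ j : Fin s, (if j = j₀ then -(s:ℝ) else 1/(s:ℝ))
            = 1/(s:ℝ) + (if j = j₀ then -(s:ℝ) - 1/(s:ℝ) else 0) := by
          intro j; split_ifs <;> ring
        rw [Finset.sum_congr rfl fun j _ => he j, Finset.sum_add_distrib,
          Finset.sum_ite_eq' Finset.univ j₀ (fun _ => -(s:ℝ) - 1/(s:ℝ)),
          if_pos (mem_univ j₀), Finset.sum_const, card_univ, Fintype.card_fin, nsmul_eq_mul]
        have hs0 : (s:ℝ) ≠ 0 := by positivity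
        field_simp
        ring
      have hs1 : (1:ℝ) ≤ (s:ℝ) := by exact_mod_cast hs
      have hpos : (0:ℝ) < 1/(s:ℝ) := by positivity
      rw [hsum] at hub
      linarith
    have h𝒞 : ∀ j, 1 ≤ (𝒞 j).val ∧ (𝒞 j).val ≤ w := fun j => ⟨h𝒞1 j, h𝒞w j⟩
    -- coverage at most one
    have hcovle : ∀ a ∈ Finset.Icc 1 (3*s),
        (∑ j : Fin s, if a ∈ X ((𝒞 j).val) then 1 else 0 : ℕ) ≤ 1 := by
      intro a ha
      rw [Finset.mem_Icc] at ha
      have := hbr ⟨a, by omega⟩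
      rw [rowsum_mid 𝒞 h𝒞 ⟨a, by omega⟩ ha.1 ha.2,
        rowsum_last hs 𝒞 h𝒞 (P t₀).1 hspec] at this
      exact_mod_cast this
    refine ⟨fun j => (𝒞 j).val, fun j => Finset.mem_Icc.mpr (h𝒞 j), ?_⟩
    ext a
    simp only [Finset.mem_biUnion, mem_univ, true_and]
    constructor
    · rintro ⟨t, ht⟩
      exact hXsub _ (h𝒞 t).1 (h𝒞 t).2 ht
    · intro ha
      have h1 : 1 ≤ (∑ j : Fin s, if a ∈ X ((𝒞 j).val) then 1 else 0 : ℕ) :=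
        cov_ge_one hs hXsub hXcard (fun j => (𝒞 j).val) h𝒞 hcovle a ha
      have h2 : (∑ j : Fin s, if a ∈ X ((𝒞 j).val) then 1 else 0 : ℕ) ≠ 0 := by omega
      obtain ⟨j, _, hj⟩ := Finset.exists_ne_zero_of_sum_ne_zero h2
      by_cases hm : a ∈ X ((𝒞 j).val)
      · exact ⟨j, hm⟩
      · rw [if_neg hm] at hj; exact absurd rfl hj
  · rintro ⟨f, hf, hcover⟩
    have hfb : ∀ j, 1 ≤ f j ∧ f j ≤ w := fun j => Finset.mem_Icc.mp (hf j)
    set 𝒞₁ : Fin s → Fin (w+2) := fun j => ⟨f j, by have := (hfb j).2; omega⟩ with h𝒞₁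
    have h𝒞 : ∀ j, 1 ≤ (𝒞₁ j).val ∧ (𝒞₁ j).val ≤ w := fun j => hfb j
    have hcovge : ∀ a ∈ Finset.Icc 1 (3*s),
        1 ≤ (∑ j : Fin s, if a ∈ X ((𝒞₁ j).val) then 1 else 0 : ℕ) := by
      intro a ha
      rw [← hcover] at ha
      simp only [Finset.mem_biUnion, mem_univ, true_and] at ha
      obtain ⟨t, ht⟩ := ha
      calc (1:ℕ) = if a ∈ X ((𝒞₁ t).val) then 1 else 0 := by rw [if_pos ht]
        _ ≤ _ := Finset.single_le_sum
          (f := fun j : Fin s => if a ∈ X ((𝒞₁ j).val) then 1 else 0)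
          (fun j _ => Nat.zero_le _) (mem_univ t)
    have hcovle : ∀ a ∈ Finset.Icc 1 (3*s),
        (∑ j : Fin s, if a ∈ X ((𝒞₁ j).val) then 1 else 0 : ℕ) ≤ 1 :=
      cov_le_one hs hXsub hXcard (fun j => (𝒞₁ j).val) h𝒞 hcovge
    have hbest := best_last hs 𝒞₁ h𝒞 hcovle ⟨3*s+1, by omega⟩ rfl
    -- the path
    set r0 : Fin (3*s+2) := ⟨0, by omega⟩ with hr0
    set rL : Fin (3*s+2) := ⟨3*s+1, by omega⟩ with hrL
    set c0 : Fin s → Fin (w+2) := fun _ => ⟨0, by omega⟩ with hc0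
    set cL : Fin s → Fin (w+2) := fun _ => ⟨w+1, by omega⟩ with hcL
    refine ⟨3, fun t => if t = 0 then (r0, c0) else if t = 1 then (r0, 𝒞₁)
      else if t = 2 then (rL, 𝒞₁) else (rL, cL), by norm_num, by norm_num, ?_⟩
    rw [pathCost, Finset.sum_range_succ, Finset.sum_range_succ, Finset.sum_range_succ,
      Finset.sum_range_zero]
    norm_num
    have hTcol01 : Tcol (ECcol s w) r0 𝒞₁ = 0 :=
      (Tcol_zero_iff r0 𝒞₁).mpr fun j => ECcol_one_of r0 (𝒞₁ j) (Nat.zero_le _) (h𝒞 j).2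
    have hTcol2 : Tcol (ECcol s w) rL cL = 0 := by
      refine (Tcol_zero_iff rL cL).mpr fun j => ?_
      unfold ECcol
      rw [if_pos (Or.inr ⟨rfl, rfl⟩)]
    have hTrow0 : Trow (ECrow s w X) c0 r0 = 0 := by
      refine (Trow_zero_iff (ECrow s w X) c0 r0).mpr fun i => ?_
      have hrhs : ∑ j, ECrow s w X r0 (c0 j) = 0 :=
        rowsum_zero c0 (fun _ => Nat.zero_le _) r0 rfl
      rw [hrhs]
      refine Finset.sum_nonpos fun j _ => ?_
      exact ECrow_col0_le X hs (by omega) i (c0 j) rfl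
    have hTrow12 : Trow (ECrow s w X) 𝒞₁ rL = 0 :=
      (Trow_zero_iff (ECrow s w X) 𝒞₁ rL).mpr hbest
    rw [hTcol01, hTcol2, hTrow0, hTrow12]
    ring
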